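/- arXiv:1305.4638 — 5 statements merged into one kernel-verified Lean document; each statement's English description precedes it below -/
import Mathlib

section
/- Let A be a connected topological abelian group (written additively) and let θ : A → A be a continuous group automorphism with θ ∘ θ = id. Let A^θ = {x ∈ A : θ(x) = x} be the fixed subgroup. Then for every x ∈ A^θ, the element x + x lies in the connected component of 0 in A^θ. Consequently, every element of the component group A^θ/(A^θ)₀ has order dividing 2, where (A^θ)₀ is the connected component of 0 in A^θ. -/
/-- Let `A` be a connected topological abelian group and `θ : A → A` a continuous group
automorphism with `θ ∘ θ = id`. Then for every `x` in the fixed subgroup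
`A^θ = {a : A | θ a = a}`, the element `x + x` lies in the connected component of `0`
in `A^θ` (with the subspace topology); equivalently, every element of the component group
`A^θ/(A^θ)₀` has order dividing `2`. -/
theorem stmt3 {A : Type*} [AddCommGroup A] [TopologicalSpace A] [IsTopologicalAddGroup A]
    [ConnectedSpace A] (θ : A →+ A) (hθc : Continuous θ) (hθθ : ∀ a, θ (θ a) = a) :
    ∀ x : A, θ x = x → x + x ∈ connectedComponentIn {a : A | θ a = a} 0 := by
  intro x hx
  set f : A → A := fun a => a + θ a with hf
  have hfc : Continuous f := continuous_id.add hθc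
  have hsub : Set.range f ⊆ {a : A | θ a = a} := by
    rintro _ ⟨a, rfl⟩
    simp [f, map_add, hθθ a, add_comm]
  have hconn : IsPreconnected (Set.range f) := isPreconnected_range hfc
  have h0 : (0 : A) ∈ Set.range f := ⟨0, by simp [f]⟩
  exact hconn.subset_connectedComponentIn h0 hsub ⟨x, by simp [f, hx]⟩
end

section
/- Let V be a finite-dimensional complex vector space, let Λ ⊂ V be a ℤ-lattice of the underlying real vector space of V (a discrete additive subgroup spanning V over ℝ), and let C : V → V be a conjugate-linear involution with C(Λ) = Λ. Then the subgroup Λ ∩ V^C spans V^C over ℝ, where V^C = {v ∈ V : C(v) = v}; that is, Λ ∩ V^C is a full ℤ-lattice in the real vector space V^C. -/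
/-- Let `V` be a finite-dimensional complex vector space, `Λ ⊂ V` a `ℤ`-lattice of the
underlying real vector space (a discrete additive subgroup spanning `V` over `ℝ`), and
`C : V → V` a conjugate-linear involution with `C(Λ) = Λ`. Then `Λ ∩ V^C` spans
`V^C = {v | C v = v}` over `ℝ`, i.e. it is a full `ℤ`-lattice in `V^C`. -/
theorem stmt6 {V : Type*} [NormedAddCommGroup V] [NormedSpace ℂ V] [FiniteDimensional ℂ V]
    (Λ : AddSubgroup V) (hdisc : DiscreteTopology Λ)
    (hspan : Submodule.span ℝ (Λ : Set V) = ⊤)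
    (C : V →ₛₗ[starRingEnd ℂ] V) (hC : ∀ v, C (C v) = v)
    (hCΛ : ∀ v, v ∈ Λ ↔ C v ∈ Λ) :
    Submodule.span ℝ ((Λ : Set V) ∩ {v | C v = v}) = Submodule.span ℝ {v | C v = v} := by
  have hFor : ∀ (a : ℝ) (x : V), C (a • x) = a • C x := by
    intro a x
    rw [← algebraMap_smul ℂ a x, C.map_smulₛₗ]
    simp [algebraMap_smul]
  apply le_antisymm
  · exact Submodule.span_mono Set.inter_subset_right
  · rw [Submodule.span_le]
    intro v hv
    have hvfix : C v = v := hv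
    have key : ∀ w ∈ Submodule.span ℝ (Λ : Set V),
        w + C w ∈ Submodule.span ℝ ((Λ : Set V) ∩ {v | C v = v}) := by
      intro w hw
      induction hw using Submodule.span_induction with
      | mem x hx =>
        apply Submodule.subset_span
        refine ⟨Λ.add_mem hx ((hCΛ x).mp hx), ?_⟩
        show C (x + C x) = x + C x
        rw [map_add, hC, add_comm]
      | zero => simpa using Submodule.zero_mem _
      | add x y hx hy ihx ihy =>
        rw [map_add]
        have := Submodule.add_mem _ ihx ihy
        convert this using 1
        abel
      | smul a x hx ih =>
        rw [hFor a x, ← smul_add]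
        exact Submodule.smul_mem _ a ih
    have h2 := key v (by rw [hspan]; trivial)
    rw [hvfix] at h2
    have hv2 : v = (2 : ℝ)⁻¹ • (v + v) := by
      rw [← two_smul ℝ v, smul_smul]
      norm_num
    rw [hv2]
    exact Submodule.smul_mem _ _ h2
end

section
/- Let V be a finite-dimensional complex vector space, let Λ ⊂ V be a ℤ-lattice of the underlying real vector space of V (a discrete additive subgroup spanning V over ℝ), and let C : V → V be a conjugate-linear involution with C(Λ) = Λ. Let q : V → V⧸Λ be the quotient homomorphism (with V⧸Λ carrying the quotient topology) and let θ : V⧸Λ → V⧸Λ be the induced map θ(q(v)) = q(C(v)), which is well defined since C(Λ) = Λ. Let F = {x ∈ V⧸Λ : θ(x) = x} be the fixed subgroup. Then the connected component of 0 in F equals the image q(V^C), where V^C = {v ∈ V : C(v) = v}. -/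
/-- Let `V` be a finite-dimensional complex vector space, `Λ ⊂ V` a `ℤ`-lattice of the
underlying real vector space, and `C : V → V` a conjugate-linear involution with
`C(Λ) = Λ`. Let `q : V → V⧸Λ` be the quotient map and `θ : V⧸Λ → V⧸Λ` the induced map
`θ(q v) = q (C v)`. Then the connected component of `0` in the fixed subgroup
`F = {x ∈ V⧸Λ : θ x = x}` equals the image `q(V^C)` of the fixed subspace
`V^C = {v | C v = v}`. -/
theorem stmt8 {V : Type*} [NormedAddCommGroup V] [NormedSpace ℂ V] [FiniteDimensional ℂ V]
    (Λ : AddSubgroup V) (hdisc : DiscreteTopology Λ)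
    (hspan : Submodule.span ℝ (Λ : Set V) = ⊤)
    (C : V →ₛₗ[starRingEnd ℂ] V) (hC : ∀ v, C (C v) = v)
    (hCΛ : ∀ v, v ∈ Λ ↔ C v ∈ Λ)
    (θ : V ⧸ Λ → V ⧸ Λ)
    (hθ : ∀ v : V, θ (QuotientAddGroup.mk v) = QuotientAddGroup.mk (C v)) :
    connectedComponentIn {x : V ⧸ Λ | θ x = x} 0 =
      QuotientAddGroup.mk '' {v : V | C v = v} := by
  classical
  let q : V → V ⧸ Λ := QuotientAddGroup.mk
  set F : Set (V ⧸ Λ) := {x : V ⧸ Λ | θ x = x} with hFdef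
  set S : Set V := {v : V | C v = v} with hSdef
  -- `C` is `ℝ`-linear
  have hCreal : ∀ (r : ℝ) (v : V), C (r • v) = r • C v := by
    intro r v
    rw [← Complex.coe_smul, map_smulₛₗ, Complex.conj_ofReal, Complex.coe_smul]
  let Cr : V →ₗ[ℝ] V :=
    { toFun := C
      map_add' := fun a b => map_add C a b
      map_smul' := fun r v => hCreal r v }
  -- a bound for `C`
  obtain ⟨c, hc0, hcb⟩ : ∃ c : ℝ, 0 ≤ c ∧ ∀ w : V, ‖C w‖ ≤ c * ‖w‖ := by
    let Cc := LinearMap.toContinuousLinearMap Cr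
    exact ⟨‖Cc‖, norm_nonneg _, fun w => Cc.le_opNorm w⟩
  -- discreteness of Λ gives a minimal norm
  obtain ⟨ε, hε, hεΛ⟩ : ∃ ε : ℝ, 0 < ε ∧ ∀ v ∈ Λ, ‖v‖ < ε → v = 0 := by
    have hopen : IsOpen ({0} : Set Λ) := isOpen_discrete _
    rw [isOpen_induced_iff] at hopen
    obtain ⟨U, hU, hU0⟩ := hopen
    have h0U : (0 : V) ∈ U := by
      have : ((0 : Λ) : V) ∈ U := by
        have : (0 : Λ) ∈ (Subtype.val ⁻¹' U : Set Λ) := by rw [hU0]; rfl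
        exact this
      simpa using this
    obtain ⟨ε, hε, hball⟩ := Metric.isOpen_iff.mp hU 0 h0U
    refine ⟨ε, hε, fun v hv hnorm => ?_⟩
    have hmem : ((⟨v, hv⟩ : Λ) : V) ∈ U := by
      apply hball
      simpa [Metric.mem_ball, dist_zero_right] using hnorm
    have : (⟨v, hv⟩ : Λ) ∈ (Subtype.val ⁻¹' U : Set Λ) := hmem
    rw [hU0] at this
    simpa using congrArg Subtype.val this
  set r : ℝ := ε / (c + 2) with hrdef
  have hr : 0 < r := div_pos hε (by linarith)
  have hrc : (c + 1) * r < ε := by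
    have h1 : (c + 1) * r < (c + 2) * r := by nlinarith
    have h2 : (c + 2) * r = ε := by
      rw [hrdef]; field_simp
    linarith
  -- membership in F via lifts
  have hFmem : ∀ v : V, q v ∈ F ↔ C v - v ∈ Λ := by
    intro v
    have h1 : (q v ∈ F) ↔ (q (C v) = q v) := by
      simp only [hFdef, Set.mem_setOf_eq]
      rw [hθ v]
    rw [h1]
    exact QuotientAddGroup.eq_iff_sub_mem
  -- the key estimate: points of F close to q(S) are in q(S)
  have star : ∀ x ∈ F, ∀ u ∈ S, dist x (q u) < r → x ∈ q '' S := by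
    intro x hx u hu hd
    obtain ⟨v₀, rfl⟩ := QuotientAddGroup.mk_surjective x
    have hsub : (QuotientAddGroup.mk (v₀ - u) : V ⧸ Λ) = q v₀ - q u := by
      simp only [q, QuotientAddGroup.mk_sub]
    have hnorm : ‖(QuotientAddGroup.mk (v₀ - u) : V ⧸ Λ)‖ < r := by
      rw [hsub, ← dist_eq_norm]; exact hd
    obtain ⟨w, hw, hwn⟩ := QuotientAddGroup.norm_lt_iff.mp hnorm
    set v : V := u + w with hvdef
    have hqv : (QuotientAddGroup.mk v : V ⧸ Λ) = QuotientAddGroup.mk v₀ := by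
      have h2 : (QuotientAddGroup.mk v : V ⧸ Λ) = QuotientAddGroup.mk u + QuotientAddGroup.mk w := by
        simp only [hvdef, QuotientAddGroup.mk_add]
      rw [h2, hw, hsub]
      abel
    have hxF : (QuotientAddGroup.mk v : V ⧸ Λ) ∈ F := by rw [hqv]; exact hx
    have hvF : C v - v ∈ Λ := (hFmem v).mp hxF
    have hvsmall : ‖C v - v‖ < ε := by
      have hCu : C u = u := hu
      have : C v - v = C w - w := by
        simp only [hvdef, map_add, hCu]
        abel
      rw [this]
      calc ‖C w - w‖ ≤ ‖C w‖ + ‖w‖ := norm_sub_le _ _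
        _ ≤ c * ‖w‖ + ‖w‖ := by have := hcb w; linarith
        _ = (c + 1) * ‖w‖ := by ring
        _ < ε := by
            rcases eq_or_lt_of_le (norm_nonneg w) with h | h
            · rw [← h]; simpa using hε
            · calc (c + 1) * ‖w‖ < (c + 1) * r := by
                    apply mul_lt_mul_of_pos_left hwn; linarith
                _ < ε := hrc
    have hvS : v ∈ S := by
      have := hεΛ _ hvF hvsmall
      simpa [hSdef, sub_eq_zero] using this
    exact ⟨v, hvS, hqv⟩
  -- basic facts
  have hQS_sub_F : q '' S ⊆ F := by
    rintro _ ⟨v, hv, rfl⟩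
    simp only [hFdef, Set.mem_setOf_eq]
    rw [hθ v, show C v = v from hv]
  have h0S : (0 : V ⧸ Λ) ∈ q '' S :=
    ⟨0, by simp [hSdef], by simp [q]⟩
  have h0F : (0 : V ⧸ Λ) ∈ F := hQS_sub_F h0S
  have hqcont : Continuous q := continuous_quot_mk
  -- q '' S is preconnected
  have hSconv : Convex ℝ S := by
    have : S = (LinearMap.ker (Cr - LinearMap.id) : Set V) := by
      ext v
      simp [hSdef, Cr, sub_eq_zero, LinearMap.sub_apply]
    rw [this]
    exact (LinearMap.ker (Cr - LinearMap.id)).convex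
  have hQSpre : IsPreconnected (q '' S) :=
    (hSconv.isPreconnected).image q hqcont.continuousOn
  -- easy inclusion
  apply Set.Subset.antisymm
  · -- hard inclusion via clopen-ness in the subtype F
    rw [connectedComponentIn_eq_image h0F]
    have hclopen : IsClopen ((Subtype.val : F → V ⧸ Λ) ⁻¹' (q '' S)) := by
      constructor
      · -- closed: the complement is open
        rw [← isOpen_compl_iff]
        have hcompl : ((Subtype.val : F → V ⧸ Λ) ⁻¹' (q '' S))ᶜ =
            (Subtype.val : F → V ⧸ Λ) ⁻¹' (⋃ x ∈ F \ q '' S, Metric.ball x r) := by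
          ext z
          simp only [Set.mem_compl_iff, Set.mem_preimage, Set.mem_iUnion, exists_prop]
          constructor
          · intro hz
            exact ⟨z.val, ⟨z.property, hz⟩, Metric.mem_ball_self hr⟩
          · rintro ⟨x, ⟨hxF, hxS⟩, hzball⟩ hzS
            obtain ⟨u, hu, hqu⟩ := hzS
            apply hxS
            apply star x hxF u hu
            rw [hqu]
            calc dist x z.val = dist z.val x := dist_comm _ _
              _ < r := hzball
        rw [hcompl]
        exact (isOpen_biUnion fun _ _ => Metric.isOpen_ball).preimage continuous_subtype_val
      · -- open
        have heq : ((Subtype.val : F → V ⧸ Λ) ⁻¹' (q '' S)) =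
            (Subtype.val : F → V ⧸ Λ) ⁻¹' (⋃ x ∈ q '' S, Metric.ball x r) := by
          ext z
          simp only [Set.mem_preimage, Set.mem_iUnion, exists_prop]
          constructor
          · intro hz
            exact ⟨z.val, hz, Metric.mem_ball_self hr⟩
          · rintro ⟨x, hxS, hzball⟩
            obtain ⟨u, hu, hqu⟩ := hxS
            apply star z.val z.property u hu
            rw [hqu]
            exact hzball
        rw [heq]
        exact (isOpen_biUnion fun _ _ => Metric.isOpen_ball).preimage continuous_subtype_val
    have h0mem : (⟨0, h0F⟩ : F) ∈ (Subtype.val : F → V ⧸ Λ) ⁻¹' (q '' S) := h0S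
    have := hclopen.connectedComponent_subset h0mem
    rintro x ⟨y, hy, rfl⟩
    exact this hy
  · exact hQSpre.subset_connectedComponentIn h0S hQS_sub_F
end

section
/- Let M ∈ GL(2,ℂ) satisfy conj(M)·M = I, where conj(M) denotes the entrywise complex conjugate of M. Then there exists A ∈ GL(2,ℂ) such that M = conj(A)⁻¹·A. -/
lemma stmt10_key (M : Matrix (Fin 2) (Fin 2) ℂ)
    (h : M.map (starRingEnd ℂ) * M = 1) (c : ℂ)
    (hc : IsUnit ((starRingEnd ℂ c) • M + c • (1 : Matrix (Fin 2) (Fin 2) ℂ)).det) :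
    ∃ A : Matrix (Fin 2) (Fin 2) ℂ, IsUnit A.det ∧
      M = (A.map (starRingEnd ℂ))⁻¹ * A := by
  set A := (starRingEnd ℂ c) • M + c • (1 : Matrix (Fin 2) (Fin 2) ℂ) with hAdef
  have hmap : A.map (starRingEnd ℂ)
      = c • M.map (starRingEnd ℂ) + (starRingEnd ℂ c) • (1 : Matrix (Fin 2) (Fin 2) ℂ) := by
    ext i j
    by_cases hij : i = j <;>
      simp [hAdef, Matrix.map_apply, Matrix.add_apply, Matrix.smul_apply, Matrix.one_apply, hij,
        mul_comm]
  have hA : A.map (starRingEnd ℂ) * M = A := by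
    rw [hmap, add_mul, smul_mul_assoc, smul_mul_assoc, h, one_mul, hAdef, add_comm]
  have hdet : IsUnit (A.map (starRingEnd ℂ)).det := by
    have : (A.map (starRingEnd ℂ)).det = (starRingEnd ℂ) A.det :=
      ((starRingEnd ℂ).map_det A).symm
    rw [this]
    exact hc.map (starRingEnd ℂ)
  refine ⟨A, hc, ?_⟩
  calc M = 1 * M := (one_mul M).symm
    _ = (A.map (starRingEnd ℂ))⁻¹ * A.map (starRingEnd ℂ) * M := by
        rw [Matrix.nonsing_inv_mul _ hdet]
    _ = (A.map (starRingEnd ℂ))⁻¹ * A := by rw [mul_assoc, hA]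

/-- If `M ∈ GL(2,ℂ)` satisfies `conj(M)·M = I`, then `M = conj(A)⁻¹·A` for some
`A ∈ GL(2,ℂ)`. -/
theorem stmt10 (M : Matrix (Fin 2) (Fin 2) ℂ) (hM : IsUnit M.det)
    (h : M.map (starRingEnd ℂ) * M = 1) :
    ∃ A : Matrix (Fin 2) (Fin 2) ℂ, IsUnit A.det ∧
      M = (A.map (starRingEnd ℂ))⁻¹ * A := by
  by_cases h1 : IsUnit ((starRingEnd ℂ 1) • M + (1 : ℂ) • (1 : Matrix (Fin 2) (Fin 2) ℂ)).det
  · exact stmt10_key M h 1 h1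
  by_cases h2 : IsUnit ((starRingEnd ℂ Complex.I) • M
      + Complex.I • (1 : Matrix (Fin 2) (Fin 2) ℂ)).det
  · exact stmt10_key M h Complex.I h2
  refine stmt10_key M h (1 + Complex.I) ?_
  rw [isUnit_iff_ne_zero] at h1 h2 ⊢
  rw [not_ne_iff] at h1 h2
  simp only [Matrix.det_fin_two, Matrix.add_apply, Matrix.smul_apply, Matrix.one_apply,
    map_one, map_add, Complex.conj_I, smul_eq_mul,
    show ((0:Fin 2) = 0) = True from by simp, show ((1:Fin 2) = 1) = True from by simp,
    show ((0:Fin 2) = 1) = False from by simp, show ((1:Fin 2) = 0) = False from by simp,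
    if_true, if_false, mul_one, mul_zero, add_zero] at h1 h2 ⊢
  intro hcontra
  have hI : Complex.I ^ 2 = -1 := Complex.I_sq
  have ht : M 0 0 + M 1 1 = 0 := by
    linear_combination (1/2) * h1 + (1/2) * h2
      - ((M 0 0 * M 1 1 - M 0 1 * M 1 0 - (M 0 0 + M 1 1) + 1)/2) * hI
  have hd : M 0 0 * M 1 1 - M 0 1 * M 1 0 = -1 := by
    linear_combination (1/2) * h1 - (1/2) * h2
      + ((M 0 0 * M 1 1 - M 0 1 * M 1 0 - (M 0 0 + M 1 1) + 1)/2) * hI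
  have h4 : (4 : ℂ) * Complex.I = 0 := by
    linear_combination hcontra + (Complex.I ^ 2 - 1) * ht - (1 - Complex.I) ^ 2 * hd
  simp [Complex.I_ne_zero] at h4
end

section
/- Let M ∈ GL(2,ℂ) satisfy conj(M)·M = −I, where conj(M) denotes the entrywise complex conjugate of M. Let J ∈ GL(2,ℂ) be the matrix with rows (0, 1) and (−1, 0). Then there exists A ∈ GL(2,ℂ) such that M = conj(A)⁻¹·J·A. -/
lemma stmt11_aux (M A : Matrix (Fin 2) (Fin 2) ℂ) (hA : A.det ≠ 0)
    (key : A.map (starRingEnd ℂ) * M = !![(0:ℂ),1;-1,0] * A) :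
    IsUnit A.det ∧ M = (A.map (starRingEnd ℂ))⁻¹ * !![(0:ℂ),1;-1,0] * A := by
  refine ⟨isUnit_iff_ne_zero.mpr hA, ?_⟩
  have hdet : (A.map (starRingEnd ℂ)).det = starRingEnd ℂ A.det := by
    simp [Matrix.det_fin_two, Matrix.map_apply]
  have hA' : IsUnit (A.map (starRingEnd ℂ)).det := by
    rw [hdet]; exact isUnit_iff_ne_zero.mpr (by simpa using hA)
  calc M = (A.map (starRingEnd ℂ))⁻¹ * (A.map (starRingEnd ℂ) * M) := by
        rw [← mul_assoc, Matrix.nonsing_inv_mul _ hA', one_mul]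
    _ = _ := by rw [key, mul_assoc]

/-- If `M ∈ GL(2,ℂ)` satisfies `conj(M)·M = −I`, and `J = !![0, 1; -1, 0]`, then
`M = conj(A)⁻¹·J·A` for some `A ∈ GL(2,ℂ)`. -/
theorem stmt11 (M : Matrix (Fin 2) (Fin 2) ℂ) (hM : IsUnit M.det)
    (h : M.map (starRingEnd ℂ) * M = -1) :
    ∃ A : Matrix (Fin 2) (Fin 2) ℂ, IsUnit A.det ∧
      M = (A.map (starRingEnd ℂ))⁻¹ * !![(0 : ℂ), 1; -1, 0] * A := by
  have hentry : ∀ i j, (M.map (starRingEnd ℂ) * M) i j = (-1 : Matrix (Fin 2) (Fin 2) ℂ) i j :=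
    fun i j => by rw [h]
  have h00 := hentry 0 0
  have h01 := hentry 0 1
  have h10 := hentry 1 0
  have h11 := hentry 1 1
  simp [Matrix.mul_apply, Fin.sum_univ_two, Matrix.map_apply, Matrix.one_apply] at h00 h01 h10 h11
  by_cases hb : M 0 1 ≠ 0
  · refine ⟨!![1, 0; M 0 0, M 0 1], stmt11_aux M _ (by simp [Matrix.det_fin_two_of, hb]) ?_⟩
    ext i j
    fin_cases i <;> fin_cases j <;>
      simp [Matrix.mul_apply, Fin.sum_univ_two, Matrix.map_apply] <;>
      first | linear_combination h00 | linear_combination h01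
  · push_neg at hb
    by_cases hc : M 1 0 ≠ 0
    · refine ⟨!![0, 1; M 1 0, M 1 1], stmt11_aux M _ (by simp [Matrix.det_fin_two_of, hc]) ?_⟩
      ext i j
      fin_cases i <;> fin_cases j <;>
        simp [Matrix.mul_apply, Fin.sum_univ_two, Matrix.map_apply] <;>
        first | linear_combination h10 | linear_combination h11
    · push_neg at hc
      exfalso
      rw [hb, hc] at h00
      simp at h00
      have : ((starRingEnd ℂ) (M 0 0) * M 0 0).re = (-1 : ℂ).re := by rw [h00]
      simp [Complex.mul_re, Complex.conj_re, Complex.conj_im] at this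
      nlinarith [sq_nonneg (M 0 0).re, sq_nonneg (M 0 0).im, this]
end
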